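/- For every n ≥ 1 and every A ⊆ [n], the set-alternating domain D_n(A) is a Condorcet domain, and it is a maximal Condorcet domain: every Condorcet domain D' of linear orders on [n] with D_n(A) ⊆ D' satisfies D' = D_n(A). -/

import Mathlib

set_option maxHeartbeats 2000000

/-- `σ` is in the set-alternating domain of `A` on alternatives `{1,…,n}`
(alternative `m` is represented by the index `m-1 : Fin n`; `σ x` is the rank
of alternative `x`, smaller rank = better). For every triple `i < j < k`:
if the middle alternative `j` (whose 1-based name is `j+1`) is in `A`, then
`i` is never ranked below both `j` and `k` (1N3); otherwise `k` is never
ranked above both `i` and `j` (3N1). -/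
def inSetAltDomain (n : ℕ) (A : Finset ℕ) (σ : Equiv.Perm (Fin n)) : Prop :=
  ∀ i j k : Fin n, i < j → j < k →
    (((j : ℕ) + 1 ∈ A) → ¬ (σ j < σ i ∧ σ k < σ i)) ∧
    (((j : ℕ) + 1 ∉ A) → ¬ (σ k < σ i ∧ σ k < σ j))

/-- The set-alternating domain `D_n(A)`. -/
def setAltDomain (n : ℕ) (A : Finset ℕ) : Set (Equiv.Perm (Fin n)) :=
  {σ | inSetAltDomain n A σ}

/-- `f_n(A)`, the cardinality of `D_n(A)`. -/
noncomputable def fsize (n : ℕ) (A : Finset ℕ) : ℕ := (setAltDomain n A).ncard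

/-- A set `D` of linear orders on `{1,…,n}` is a Condorcet domain: for every
profile of `2m+1` voters with orders from `D`, the majority relation
(`x` beats `y` iff more than `m` voters rank `x` above `y`) is transitive. -/
def IsCondorcetDomain (n : ℕ) (D : Set (Equiv.Perm (Fin n))) : Prop :=
  ∀ m : ℕ, ∀ P : Fin (2*m+1) → Equiv.Perm (Fin n), (∀ i, P i ∈ D) →
    ∀ x y z : Fin n,
      m < (Finset.univ.filter (fun i => (P i) x < (P i) y)).card →
      m < (Finset.univ.filter (fun i => (P i) y < (P i) z)).card →
      m < (Finset.univ.filter (fun i => (P i) x < (P i) z)).card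

/- ## Auxiliary counting lemmas -/

lemma filter_card_add {n N : ℕ} (P : Fin N → Equiv.Perm (Fin n)) {x y : Fin n} (hxy : x ≠ y) :
    (Finset.univ.filter (fun v => (P v) x < (P v) y)).card +
    (Finset.univ.filter (fun v => (P v) y < (P v) x)).card = N := by
  classical
  have h1 : (Finset.univ.filter (fun v : Fin N => (P v) y < (P v) x))
      = (Finset.univ.filter (fun v : Fin N => ¬ ((P v) x < (P v) y))) := by
    apply Finset.filter_congr
    intro v _
    have hne : (P v) x ≠ (P v) y := fun h => hxy ((P v).injective h)
    constructor
    · intro h h'; exact absurd (h'.trans h) (lt_irrefl _)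
    · intro h
      rcases lt_or_gt_of_ne hne with h' | h'
      · exact absurd h' h
      · exact h'
  rw [h1, Finset.card_filter_add_card_filter_not, Finset.card_univ, Fintype.card_fin]

lemma exists_mem_inter {m : ℕ} (S T : Finset (Fin (2*m+1))) (hS : m < S.card) (hT : m < T.card) :
    ∃ v, v ∈ S ∧ v ∈ T := by
  by_contra h
  push_neg at h
  have hdis : Disjoint S T := by
    rw [Finset.disjoint_left]; exact fun a ha hb => h a ha hb
  have h2 := Finset.card_union_of_disjoint hdis
  have hle : (S ∪ T).card ≤ 2*m+1 := le_trans (Finset.card_le_univ _) (by simp)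
  omega

lemma perm_lt_of_not_lt {n : ℕ} (σ : Equiv.Perm (Fin n)) {x y : Fin n} (hxy : x ≠ y)
    (h : ¬ σ x < σ y) : σ y < σ x := by
  have hne : σ x ≠ σ y := fun h' => hxy (σ.injective h')
  rcases lt_or_gt_of_ne hne with h' | h'
  · exact absurd h' h
  · exact h'

/- ## The domain is a Condorcet domain -/

lemma sorted_cycle1 {n : ℕ} {A : Finset ℕ} {m : ℕ} (P : Fin (2*m+1) → Equiv.Perm (Fin n))
    (hP : ∀ v, P v ∈ setAltDomain n A) {i j k : Fin n} (hij : i < j) (hjk : j < k)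
    (e2 : m < (Finset.univ.filter (fun v => (P v) j < (P v) k)).card)
    (e3 : m < (Finset.univ.filter (fun v => (P v) k < (P v) i)).card)
    (e1 : m < (Finset.univ.filter (fun v => (P v) i < (P v) j)).card) : False := by
  by_cases hA : (j : ℕ) + 1 ∈ A
  · obtain ⟨v, hv2, hv3⟩ := exists_mem_inter _ _ e2 e3
    rw [Finset.mem_filter] at hv2 hv3
    exact ((hP v) i j k hij hjk).1 hA ⟨hv2.2.trans hv3.2, hv3.2⟩
  · have hsub : (Finset.univ.filter (fun v => (P v) k < (P v) i)) ⊆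
        (Finset.univ.filter (fun v => (P v) j < (P v) i)) := by
      intro v hv
      rw [Finset.mem_filter] at hv ⊢
      refine ⟨hv.1, ?_⟩
      have hnt := ((hP v) i j k hij hjk).2 hA
      have hkj : ¬ ((P v) k < (P v) j) := fun h => hnt ⟨hv.2, h⟩
      exact (perm_lt_of_not_lt (P v) (fun h => absurd h hjk.ne') hkj).trans hv.2
    have h4 : m < (Finset.univ.filter (fun v => (P v) j < (P v) i)).card :=
      lt_of_lt_of_le e3 (Finset.card_le_card hsub)
    have h5 := filter_card_add P hij.ne
    omega

lemma sorted_cycle2 {n : ℕ} {A : Finset ℕ} {m : ℕ} (P : Fin (2*m+1) → Equiv.Perm (Fin n))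
    (hP : ∀ v, P v ∈ setAltDomain n A) {i j k : Fin n} (hij : i < j) (hjk : j < k)
    (e1 : m < (Finset.univ.filter (fun v => (P v) i < (P v) k)).card)
    (e2 : m < (Finset.univ.filter (fun v => (P v) k < (P v) j)).card)
    (e3 : m < (Finset.univ.filter (fun v => (P v) j < (P v) i)).card) : False := by
  by_cases hA : (j : ℕ) + 1 ∈ A
  · obtain ⟨v, hv2, hv3⟩ := exists_mem_inter _ _ e2 e3
    rw [Finset.mem_filter] at hv2 hv3
    exact ((hP v) i j k hij hjk).1 hA ⟨hv3.2, hv2.2.trans hv3.2⟩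
  · have hsub : (Finset.univ.filter (fun v => (P v) k < (P v) j)) ⊆
        (Finset.univ.filter (fun v => (P v) i < (P v) j)) := by
      intro v hv
      rw [Finset.mem_filter] at hv ⊢
      refine ⟨hv.1, ?_⟩
      have hnt := ((hP v) i j k hij hjk).2 hA
      have hki : ¬ ((P v) k < (P v) i) := fun h => hnt ⟨h, hv.2⟩
      exact (perm_lt_of_not_lt (P v) (hij.trans hjk).ne' hki).trans hv.2
    have h4 : m < (Finset.univ.filter (fun v => (P v) i < (P v) j)).card :=
      lt_of_lt_of_le e2 (Finset.card_le_card hsub)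
    have h5 := filter_card_add P hij.ne
    omega

lemma domain_is_condorcet (n : ℕ) (A : Finset ℕ) : IsCondorcetDomain n (setAltDomain n A) := by
  intro m P hP x y z hxy hyz
  by_contra hxz
  push_neg at hxz
  have hxny : x ≠ y := by
    rintro rfl
    simp only [lt_self_iff_false, Finset.filter_false, Finset.card_empty] at hxy
    omega
  have hynz : y ≠ z := by
    rintro rfl
    simp only [lt_self_iff_false, Finset.filter_false, Finset.card_empty] at hyz
    omega
  have hxnz : x ≠ z := by
    rintro rfl
    have := filter_card_add P hxny
    omega
  have hzx : m < (Finset.univ.filter (fun v => (P v) z < (P v) x)).card := by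
    have := filter_card_add P hxnz
    omega
  rcases lt_or_gt_of_ne hxny with h1 | h1 <;>
  rcases lt_or_gt_of_ne hynz with h2 | h2 <;>
  rcases lt_or_gt_of_ne hxnz with h3 | h3
  · exact sorted_cycle1 P hP h1 h2 hyz hzx hxy
  · exact absurd (h1.trans h2) (asymm h3)
  · exact sorted_cycle2 P hP h3 h2 hxy hyz hzx
  · exact sorted_cycle1 P hP h3 h1 hxy hyz hzx
  · exact sorted_cycle2 P hP h1 h3 hyz hzx hxy
  · exact sorted_cycle1 P hP h2 h3 hzx hxy hyz
  · exact absurd (h2.trans h1) (asymm h3)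
  · exact sorted_cycle2 P hP h2 h1 hzx hxy hyz

/- ## Key functions for constructing members of the domain -/

def keyI (n p m : ℕ) (A : Finset ℕ) (x : ℕ) : ℕ :=
  if x < p then x
  else if x = m ∨ (p < x ∧ x < m ∧ x + 1 ∉ A) then n + x
  else if x = p then 2*n
  else 3*n + x

def keyII (n q r : ℕ) (A : Finset ℕ) (x : ℕ) : ℕ :=
  if x < q then x
  else if x = q ∨ (q < x ∧ x < r ∧ x + 1 ∈ A) then 2*n + x
  else if x ≤ r then n + x
  else 3*n + x

lemma keyI_inj (n p m : ℕ) (A : Finset ℕ) {x y : ℕ} (hx : x < n) (hy : y < n)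
    (h : keyI n p m A x = keyI n p m A y) : x = y := by
  unfold keyI at h; split_ifs at h <;> omega

lemma keyII_inj (n q r : ℕ) (A : Finset ℕ) {x y : ℕ} (hx : x < n) (hy : y < n)
    (h : keyII n q r A x = keyII n q r A y) : x = y := by
  unfold keyII at h; split_ifs at h <;> omega

lemma keyI_1N3 (n p m a b c : ℕ) (A : Finset ℕ) (hab : a < b) (hbc : b < c) (hc : c < n)
    (hpm : p < m) (hm : m < n) (hb : b + 1 ∈ A) :
    ¬(keyI n p m A b < keyI n p m A a ∧ keyI n p m A c < keyI n p m A a) := by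
  unfold keyI
  by_cases hA1 : a + 1 ∈ A <;> by_cases hA2 : c + 1 ∈ A <;>
    simp only [hb, hA1, hA2, not_true_eq_false, not_false_eq_true, and_true, and_false,
      true_and, false_and, or_false, or_true, false_or, true_or] <;>
    split_ifs <;> omega

lemma keyI_3N1 (n p m a b c : ℕ) (A : Finset ℕ) (hab : a < b) (hbc : b < c) (hc : c < n)
    (hpm : p < m) (hm : m < n) (hb : b + 1 ∉ A) :
    ¬(keyI n p m A c < keyI n p m A a ∧ keyI n p m A c < keyI n p m A b) := by
  unfold keyI
  by_cases hA1 : a + 1 ∈ A <;> by_cases hA2 : c + 1 ∈ A <;>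
    simp only [hb, hA1, hA2, not_true_eq_false, not_false_eq_true, and_true, and_false,
      true_and, false_and, or_false, or_true, false_or, true_or] <;>
    split_ifs <;> omega

lemma keyII_1N3 (n q r a b c : ℕ) (A : Finset ℕ) (hab : a < b) (hbc : b < c) (hc : c < n)
    (hqr : q < r) (hr : r < n) (hb : b + 1 ∈ A) :
    ¬(keyII n q r A b < keyII n q r A a ∧ keyII n q r A c < keyII n q r A a) := by
  unfold keyII
  by_cases hA1 : a + 1 ∈ A <;> by_cases hA2 : c + 1 ∈ A <;>
    simp only [hb, hA1, hA2, not_true_eq_false, not_false_eq_true, and_true, and_false,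
      true_and, false_and, or_false, or_true, false_or, true_or] <;>
    split_ifs <;> omega

lemma keyII_3N1 (n q r a b c : ℕ) (A : Finset ℕ) (hab : a < b) (hbc : b < c) (hc : c < n)
    (hqr : q < r) (hr : r < n) (hb : b + 1 ∉ A) :
    ¬(keyII n q r A c < keyII n q r A a ∧ keyII n q r A c < keyII n q r A b) := by
  unfold keyII
  by_cases hA1 : a + 1 ∈ A <;> by_cases hA2 : c + 1 ∈ A <;>
    simp only [hb, hA1, hA2, not_true_eq_false, not_false_eq_true, and_true, and_false,
      true_and, false_and, or_false, or_true, false_or, true_or] <;>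
    split_ifs <;> omega

lemma exists_perm_of_key {n : ℕ} (κ : Fin n → ℕ) (hκ : Function.Injective κ) :
    ∃ σ : Equiv.Perm (Fin n), ∀ x y, σ x < σ y ↔ κ x < κ y := by
  classical
  set s : Finset ℕ := Finset.univ.image κ with hs
  have hcard : s.card = n := by
    rw [hs, Finset.card_image_of_injective _ hκ, Finset.card_univ, Fintype.card_fin]
  set e := s.orderIsoOfFin hcard with he
  have hmem : ∀ x, κ x ∈ s := fun x => Finset.mem_image_of_mem _ (Finset.mem_univ x)
  set g : Fin n → Fin n := fun x => e.symm ⟨κ x, hmem x⟩ with hg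
  have hgiff : ∀ x y, g x < g y ↔ κ x < κ y := by
    intro x y
    rw [hg]
    simp only []
    rw [OrderIso.lt_iff_lt]
    exact Subtype.mk_lt_mk
  have hginj : Function.Injective g := by
    intro x y hxy
    apply hκ
    have h1 : ¬ κ x < κ y := by rw [← hgiff]; rw [hxy]; exact lt_irrefl _
    have h2 : ¬ κ y < κ x := by rw [← hgiff]; rw [hxy]; exact lt_irrefl _
    omega
  have hbij : Function.Bijective g := (Finite.injective_iff_bijective).mp hginj
  refine ⟨Equiv.ofBijective g hbij, ?_⟩
  intro x y
  rw [Equiv.ofBijective_apply, Equiv.ofBijective_apply]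
  exact hgiff x y

lemma exists_permI (n p m : ℕ) (A : Finset ℕ) (hpm : p < m) (hm : m < n) :
    ∃ σ : Equiv.Perm (Fin n), σ ∈ setAltDomain n A ∧
      ∀ x y : Fin n, σ x < σ y ↔ keyI n p m A (x : ℕ) < keyI n p m A (y : ℕ) := by
  obtain ⟨σ, hσ⟩ := exists_perm_of_key (fun x : Fin n => keyI n p m A (x : ℕ)) (by
    intro x y h
    exact Fin.val_injective (keyI_inj n p m A x.isLt y.isLt h))
  refine ⟨σ, ?_, hσ⟩
  intro i j k hij hjk
  have hijn : (i : ℕ) < (j : ℕ) := hij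
  have hjkn : (j : ℕ) < (k : ℕ) := hjk
  constructor
  · intro hA hcon
    exact keyI_1N3 n p m _ _ _ A hijn hjkn k.isLt hpm hm hA
      ⟨(hσ j i).mp hcon.1, (hσ k i).mp hcon.2⟩
  · intro hA hcon
    exact keyI_3N1 n p m _ _ _ A hijn hjkn k.isLt hpm hm hA
      ⟨(hσ k i).mp hcon.1, (hσ k j).mp hcon.2⟩

lemma exists_permII (n q r : ℕ) (A : Finset ℕ) (hqr : q < r) (hr : r < n) :
    ∃ σ : Equiv.Perm (Fin n), σ ∈ setAltDomain n A ∧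
      ∀ x y : Fin n, σ x < σ y ↔ keyII n q r A (x : ℕ) < keyII n q r A (y : ℕ) := by
  obtain ⟨σ, hσ⟩ := exists_perm_of_key (fun x : Fin n => keyII n q r A (x : ℕ)) (by
    intro x y h
    exact Fin.val_injective (keyII_inj n q r A x.isLt y.isLt h))
  refine ⟨σ, ?_, hσ⟩
  intro i j k hij hjk
  have hijn : (i : ℕ) < (j : ℕ) := hij
  have hjkn : (j : ℕ) < (k : ℕ) := hjk
  constructor
  · intro hA hcon
    exact keyII_1N3 n q r _ _ _ A hijn hjkn k.isLt hqr hr hA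
      ⟨(hσ j i).mp hcon.1, (hσ k i).mp hcon.2⟩
  · intro hA hcon
    exact keyII_3N1 n q r _ _ _ A hijn hjkn k.isLt hqr hr hA
      ⟨(hσ k i).mp hcon.1, (hσ k j).mp hcon.2⟩

lemma one_mem (n : ℕ) (A : Finset ℕ) : (1 : Equiv.Perm (Fin n)) ∈ setAltDomain n A := by
  intro i j k hij hjk
  constructor
  · intro _ h
    exact absurd h.1 (asymm hij)
  · intro _ h
    exact absurd h.1 (asymm (hij.trans hjk))

/- ## Values of the key functions -/

lemma keyII_at_q (n q r : ℕ) (A : Finset ℕ) : keyII n q r A q = 2*n + q := by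
  unfold keyII; rw [if_neg (lt_irrefl q), if_pos (Or.inl rfl)]

lemma keyII_at_r (n q r : ℕ) (A : Finset ℕ) (hqr : q < r) : keyII n q r A r = n + r := by
  unfold keyII
  rw [if_neg (by omega), if_neg (by rintro (h | ⟨h1, h2, h3⟩) <;> omega), if_pos (le_refl r)]

lemma keyII_at_lo (n q r x : ℕ) (A : Finset ℕ) (h : x < q) : keyII n q r A x = x := by
  unfold keyII; rw [if_pos h]

lemma keyII_at_mid_mem (n q r x : ℕ) (A : Finset ℕ) (hqx : q < x) (hxr : x < r)
    (hx : x + 1 ∈ A) : keyII n q r A x = 2*n + x := by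
  unfold keyII; rw [if_neg (by omega), if_pos (Or.inr ⟨hqx, hxr, hx⟩)]

lemma keyII_at_mid_not (n q r x : ℕ) (A : Finset ℕ) (hqx : q < x) (hxr : x < r)
    (hx : x + 1 ∉ A) : keyII n q r A x = n + x := by
  unfold keyII
  rw [if_neg (by omega),
    if_neg (by rintro (h | ⟨h1, h2, h3⟩) <;> first | omega | exact hx h3),
    if_pos (le_of_lt hxr)]

lemma keyI_at_m (n p m : ℕ) (A : Finset ℕ) (hpm : p < m) : keyI n p m A m = n + m := by
  unfold keyI; rw [if_neg (by omega), if_pos (Or.inl rfl)]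

lemma keyI_at_p (n p m : ℕ) (A : Finset ℕ) (hpm : p < m) : keyI n p m A p = 2*n := by
  unfold keyI
  rw [if_neg (lt_irrefl p), if_neg (by rintro (h | ⟨h1, h2, h3⟩) <;> omega), if_pos rfl]

lemma keyI_at_hi (n p m x : ℕ) (A : Finset ℕ) (hpm : p < m) (h : m < x) :
    keyI n p m A x = 3*n + x := by
  unfold keyI
  rw [if_neg (by omega), if_neg (by rintro (h' | ⟨h1, h2, h3⟩) <;> omega), if_neg (by omega)]

/- ## Refutation lemmas for maximality -/

lemma fin3_cases (v : Fin (2*1+1)) : v = 0 ∨ v = 1 ∨ v = 2 := by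
  rcases v with ⟨vv, h⟩
  interval_cases vv
  · exact Or.inl rfl
  · exact Or.inr (Or.inl rfl)
  · exact Or.inr (Or.inr rfl)

lemma refute_kji {n : ℕ} {A : Finset ℕ} {D' : Set (Equiv.Perm (Fin n))}
    (hD' : IsCondorcetDomain n D') (hsub : setAltDomain n A ⊆ D')
    {i j k : Fin n} (hij : i < j) (hjk : j < k)
    {σ : Equiv.Perm (Fin n)} (hσ : σ ∈ D')
    (h1 : σ j < σ i) (h2 : σ k < σ j) : False := by
  classical
  have hijn : (i : ℕ) < (j : ℕ) := hij
  have hjkn : (j : ℕ) < (k : ℕ) := hjk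
  have hkn : (k : ℕ) < n := k.isLt
  obtain ⟨τ, hτD, hτ⟩ := exists_permII n (j : ℕ) (k : ℕ) A hjkn hkn
  obtain ⟨ρ, hρD, hρ⟩ := exists_permI n (i : ℕ) (j : ℕ) A hijn (lt_trans hjkn hkn)
  set P : Fin (2*1+1) → Equiv.Perm (Fin n) :=
    fun v => if v = 0 then σ else if v = 1 then τ else ρ with hPdef
  have hP0 : P 0 = σ := by simp [hPdef]
  have hP1 : P 1 = τ := by simp [hPdef]
  have hP2 : P 2 = ρ := by simp [hPdef]
  have hPD : ∀ v, P v ∈ D' := by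
    intro v
    rcases fin3_cases v with hv | hv | hv <;> rw [hv]
    · rw [hP0]; exact hσ
    · rw [hP1]; exact hsub hτD
    · rw [hP2]; exact hsub hρD
  have hτik : τ i < τ k := (hτ i k).mpr (by
    rw [keyII_at_lo n (j : ℕ) (k : ℕ) (i : ℕ) A hijn, keyII_at_r n (j : ℕ) (k : ℕ) A hjkn]
    omega)
  have hρik : ρ i < ρ k := (hρ i k).mpr (by
    rw [keyI_at_p n (i : ℕ) (j : ℕ) A hijn, keyI_at_hi n (i : ℕ) (j : ℕ) (k : ℕ) A hijn hjkn]
    omega)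
  have hτkj : τ k < τ j := (hτ k j).mpr (by
    rw [keyII_at_r n (j : ℕ) (k : ℕ) A hjkn, keyII_at_q n (j : ℕ) (k : ℕ) A]
    omega)
  have maj1 : 1 < (Finset.univ.filter (fun v => (P v) i < (P v) k)).card := by
    apply Finset.one_lt_card.mpr
    refine ⟨1, Finset.mem_filter.mpr ⟨Finset.mem_univ _, by rw [hP1]; exact hτik⟩,
      2, Finset.mem_filter.mpr ⟨Finset.mem_univ _, by rw [hP2]; exact hρik⟩, by decide⟩
  have maj2 : 1 < (Finset.univ.filter (fun v => (P v) k < (P v) j)).card := by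
    apply Finset.one_lt_card.mpr
    refine ⟨0, Finset.mem_filter.mpr ⟨Finset.mem_univ _, by rw [hP0]; exact h2⟩,
      1, Finset.mem_filter.mpr ⟨Finset.mem_univ _, by rw [hP1]; exact hτkj⟩, by decide⟩
  have hcon := hD' 1 P hPD i k j maj1 maj2
  have hexc : Finset.univ.filter (fun v => (P v) i < (P v) j) ⊆ {1} := by
    intro v hv
    rw [Finset.mem_filter] at hv
    have hv2 := hv.2
    rcases fin3_cases v with hv3 | hv3 | hv3 <;> rw [hv3] at hv2 ⊢
    · rw [hP0] at hv2
      exact absurd hv2 (asymm h1)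
    · exact Finset.mem_singleton.mpr rfl
    · rw [hP2, hρ] at hv2
      rw [keyI_at_p n (i : ℕ) (j : ℕ) A hijn, keyI_at_m n (i : ℕ) (j : ℕ) A hijn] at hv2
      have : (j : ℕ) < n := j.isLt
      omega
  have hle := Finset.card_le_card hexc
  rw [Finset.card_singleton] at hle
  omega

lemma refute_jki {n : ℕ} {A : Finset ℕ} {D' : Set (Equiv.Perm (Fin n))}
    (hD' : IsCondorcetDomain n D') (hsub : setAltDomain n A ⊆ D')
    {i j k : Fin n} (hij : i < j) (hjk : j < k)
    {σ : Equiv.Perm (Fin n)} (hσ : σ ∈ D') (hmem : (j : ℕ) + 1 ∈ A)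
    (h1 : σ j < σ k) (h2 : σ k < σ i) : False := by
  classical
  have hijn : (i : ℕ) < (j : ℕ) := hij
  have hjkn : (j : ℕ) < (k : ℕ) := hjk
  have hkn : (k : ℕ) < n := k.isLt
  obtain ⟨τ, hτD, hτ⟩ := exists_permII n (i : ℕ) (k : ℕ) A (lt_trans hijn hjkn) hkn
  set ρ : Equiv.Perm (Fin n) := 1 with hρdef
  set P : Fin (2*1+1) → Equiv.Perm (Fin n) :=
    fun v => if v = 0 then σ else if v = 1 then τ else ρ with hPdef
  have hP0 : P 0 = σ := by simp [hPdef]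
  have hP1 : P 1 = τ := by simp [hPdef]
  have hP2 : P 2 = ρ := by simp [hPdef]
  have hPD : ∀ v, P v ∈ D' := by
    intro v
    rcases fin3_cases v with hv | hv | hv <;> rw [hv]
    · rw [hP0]; exact hσ
    · rw [hP1]; exact hsub hτD
    · rw [hP2]; exact hsub (one_mem n A)
  have hτi : keyII n (i : ℕ) (k : ℕ) A (i : ℕ) = 2*n + (i : ℕ) := keyII_at_q n _ _ A
  have hτj : keyII n (i : ℕ) (k : ℕ) A (j : ℕ) = 2*n + (j : ℕ) :=
    keyII_at_mid_mem n _ _ _ A hijn hjkn hmem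
  have hτk : keyII n (i : ℕ) (k : ℕ) A (k : ℕ) = n + (k : ℕ) :=
    keyII_at_r n _ _ A (lt_trans hijn hjkn)
  have maj1 : 1 < (Finset.univ.filter (fun v => (P v) i < (P v) j)).card := by
    apply Finset.one_lt_card.mpr
    refine ⟨1, Finset.mem_filter.mpr ⟨Finset.mem_univ _,
        by rw [hP1]; exact (hτ i j).mpr (by rw [hτi, hτj]; omega)⟩,
      2, Finset.mem_filter.mpr ⟨Finset.mem_univ _,
        by rw [hP2, hρdef]; simpa using hij⟩, by decide⟩
  have maj2 : 1 < (Finset.univ.filter (fun v => (P v) j < (P v) k)).card := by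
    apply Finset.one_lt_card.mpr
    refine ⟨0, Finset.mem_filter.mpr ⟨Finset.mem_univ _, by rw [hP0]; exact h1⟩,
      2, Finset.mem_filter.mpr ⟨Finset.mem_univ _,
        by rw [hP2, hρdef]; simpa using hjk⟩, by decide⟩
  have hcon := hD' 1 P hPD i j k maj1 maj2
  have hexc : Finset.univ.filter (fun v => (P v) i < (P v) k) ⊆ {2} := by
    intro v hv
    rw [Finset.mem_filter] at hv
    have hv2 := hv.2
    rcases fin3_cases v with hv3 | hv3 | hv3 <;> rw [hv3] at hv2 ⊢
    · rw [hP0] at hv2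
      exact absurd hv2 (asymm h2)
    · rw [hP1, hτ] at hv2
      rw [hτi, hτk] at hv2
      omega
    · exact Finset.mem_singleton.mpr rfl
  have hle := Finset.card_le_card hexc
  rw [Finset.card_singleton] at hle
  omega

lemma refute_kij {n : ℕ} {A : Finset ℕ} {D' : Set (Equiv.Perm (Fin n))}
    (hD' : IsCondorcetDomain n D') (hsub : setAltDomain n A ⊆ D')
    {i j k : Fin n} (hij : i < j) (hjk : j < k)
    {σ : Equiv.Perm (Fin n)} (hσ : σ ∈ D') (hmem : (j : ℕ) + 1 ∉ A)
    (h1 : σ k < σ i) (h2 : σ i < σ j) : False := by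
  classical
  have hijn : (i : ℕ) < (j : ℕ) := hij
  have hjkn : (j : ℕ) < (k : ℕ) := hjk
  have hkn : (k : ℕ) < n := k.isLt
  obtain ⟨τ, hτD, hτ⟩ := exists_permII n (i : ℕ) (k : ℕ) A (lt_trans hijn hjkn) hkn
  set ρ : Equiv.Perm (Fin n) := 1 with hρdef
  set P : Fin (2*1+1) → Equiv.Perm (Fin n) :=
    fun v => if v = 0 then σ else if v = 1 then τ else ρ with hPdef
  have hP0 : P 0 = σ := by simp [hPdef]
  have hP1 : P 1 = τ := by simp [hPdef]
  have hP2 : P 2 = ρ := by simp [hPdef]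
  have hPD : ∀ v, P v ∈ D' := by
    intro v
    rcases fin3_cases v with hv | hv | hv <;> rw [hv]
    · rw [hP0]; exact hσ
    · rw [hP1]; exact hsub hτD
    · rw [hP2]; exact hsub (one_mem n A)
  have hτi : keyII n (i : ℕ) (k : ℕ) A (i : ℕ) = 2*n + (i : ℕ) := keyII_at_q n _ _ A
  have hτj : keyII n (i : ℕ) (k : ℕ) A (j : ℕ) = n + (j : ℕ) :=
    keyII_at_mid_not n _ _ _ A hijn hjkn hmem
  have hτk : keyII n (i : ℕ) (k : ℕ) A (k : ℕ) = n + (k : ℕ) :=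
    keyII_at_r n _ _ A (lt_trans hijn hjkn)
  have maj1 : 1 < (Finset.univ.filter (fun v => (P v) i < (P v) j)).card := by
    apply Finset.one_lt_card.mpr
    refine ⟨0, Finset.mem_filter.mpr ⟨Finset.mem_univ _, by rw [hP0]; exact h2⟩,
      2, Finset.mem_filter.mpr ⟨Finset.mem_univ _,
        by rw [hP2, hρdef]; simpa using hij⟩, by decide⟩
  have maj2 : 1 < (Finset.univ.filter (fun v => (P v) j < (P v) k)).card := by
    apply Finset.one_lt_card.mpr
    refine ⟨1, Finset.mem_filter.mpr ⟨Finset.mem_univ _,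
        by rw [hP1]; exact (hτ j k).mpr (by rw [hτj, hτk]; omega)⟩,
      2, Finset.mem_filter.mpr ⟨Finset.mem_univ _,
        by rw [hP2, hρdef]; simpa using hjk⟩, by decide⟩
  have hcon := hD' 1 P hPD i j k maj1 maj2
  have hexc : Finset.univ.filter (fun v => (P v) i < (P v) k) ⊆ {2} := by
    intro v hv
    rw [Finset.mem_filter] at hv
    have hv2 := hv.2
    rcases fin3_cases v with hv3 | hv3 | hv3 <;> rw [hv3] at hv2 ⊢
    · rw [hP0] at hv2
      exact absurd hv2 (asymm h1)
    · rw [hP1, hτ] at hv2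
      rw [hτi, hτk] at hv2
      omega
    · exact Finset.mem_singleton.mpr rfl
  have hle := Finset.card_le_card hexc
  rw [Finset.card_singleton] at hle
  omega

/-- every set-alternating domain is a Condorcet domain, and a
maximal one. -/
theorem stmt1 (n : ℕ) (hn : 1 ≤ n) (A : Finset ℕ) (hA : A ⊆ Finset.Icc 1 n) :
    IsCondorcetDomain n (setAltDomain n A) ∧
    ∀ D' : Set (Equiv.Perm (Fin n)), IsCondorcetDomain n D' →
      setAltDomain n A ⊆ D' → D' = setAltDomain n A := by
  refine ⟨domain_is_condorcet n A, ?_⟩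
  intro D' hD' hsub
  apply Set.Subset.antisymm _ hsub
  intro σ hσ
  by_contra hnot
  have hnot' : ¬ inSetAltDomain n A σ := hnot
  rw [inSetAltDomain] at hnot'
  obtain ⟨i, hni⟩ := not_forall.mp hnot'
  obtain ⟨j, hnj⟩ := not_forall.mp hni
  obtain ⟨k, hnk⟩ := not_forall.mp hnj
  obtain ⟨hij, hnk2⟩ := _root_.not_imp.mp hnk
  obtain ⟨hjk, hbad⟩ := _root_.not_imp.mp hnk2
  by_cases hmem : (j : ℕ) + 1 ∈ A
  · have hX : σ j < σ i ∧ σ k < σ i := by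
      by_contra hX
      exact hbad ⟨fun _ => hX, fun h => absurd hmem h⟩
    have hnejk : σ j ≠ σ k := fun h => (hjk.ne) (σ.injective h)
    rcases lt_or_gt_of_ne hnejk with hc | hc
    · exact refute_jki hD' hsub hij hjk hσ hmem hc hX.2
    · exact refute_kji hD' hsub hij hjk hσ hX.1 hc
  · have hY : σ k < σ i ∧ σ k < σ j := by
      by_contra hY
      exact hbad ⟨fun h => absurd h hmem, fun _ => hY⟩
    have hneij : σ i ≠ σ j := fun h => (hij.ne) (σ.injective h)
    rcases lt_or_gt_of_ne hneij with hc | hc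
    · exact refute_kij hD' hsub hij hjk hσ hmem hY.1 hc
    · exact refute_kji hD' hsub hij hjk hσ hc hY.2
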